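/- If R0 > 1, then the planar system has exactly one equilibrium (the endemic equilibrium) in the interior of D1: there exists a unique (i1, i2) with i1 > 0, i2 > 0, i1 + i2 < 1 and F(i1, i2) = (0, 0). -/

import Mathlib

open Filter Topology Matrix

/-- Right-hand side of the planar system on `ℝ × ℝ` (coordinates `(i1, i2)`). -/
noncomputable def planarF (b b2 ε l1 l2 γ1 γ2 p q : ℝ) (x : ℝ × ℝ) : ℝ × ℝ :=
  ((p*l1 - b - ε - γ1)*x.1 + p*l2*x.2 + (x.1 + x.2)*((b2 + ε - p*l1)*x.1 - p*l2*x.2),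
   q*l1*x.1 + (q*l2 - b - ε - γ2)*x.2 + (x.1 + x.2)*((b2 + ε - q*l2)*x.2 - q*l1*x.1))

/-- The auxiliary function whose root in `(0,1)` gives the total infectious fraction
at the endemic equilibrium. -/
noncomputable def Hfun (A B m p q l1 l2 n : ℝ) : ℝ :=
  (1-n)*(p*l1/(A-m*n) + q*l2/(B-m*n))

lemma Hrepr (A B m p q l1 l2 n : ℝ) (hA : A - m*n ≠ 0) (hB : B - m*n ≠ 0) :
    Hfun A B m p q l1 l2 n
      = (1-n)*(p*l1*(B-m*n) + q*l2*(A-m*n))/((A-m*n)*(B-m*n)) := by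
  unfold Hfun
  rw [div_add_div _ _ hA hB]; ring

lemma Hroot (A B m p q l1 l2 : ℝ) (hm : 0 < m) (hmA : m < A) (hmB : m < B)
    (hp : 0 < p) (hq : 0 < q) (hl1 : 0 < l1) (hl2 : 0 < l2)
    (hR0 : 1 < p*l1/A + q*l2/B) :
    ∃ n ∈ Set.Ioo (0:ℝ) 1, Hfun A B m p q l1 l2 n = 1 := by
  have hA : 0 < A := hm.trans hmA
  have hB : 0 < B := hm.trans hmB
  have hden1 : ∀ x ∈ Set.Icc (0:ℝ) 1, 0 < A - m*x := by
    intro x hx; nlinarith [hx.1, hx.2]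
  have hden2 : ∀ x ∈ Set.Icc (0:ℝ) 1, 0 < B - m*x := by
    intro x hx; nlinarith [hx.1, hx.2]
  have hcont : ContinuousOn (Hfun A B m p q l1 l2) (Set.Icc 0 1) := by
    unfold Hfun
    apply ContinuousOn.mul (by fun_prop)
    apply ContinuousOn.add
    · exact ContinuousOn.div (by fun_prop) (by fun_prop)
        (fun x hx => ne_of_gt (hden1 x hx))
    · exact ContinuousOn.div (by fun_prop) (by fun_prop)
        (fun x hx => ne_of_gt (hden2 x hx))
  have hH0 : Hfun A B m p q l1 l2 0 = p*l1/A + q*l2/B := by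
    unfold Hfun; norm_num
  have hH1 : Hfun A B m p q l1 l2 1 = 0 := by
    unfold Hfun; norm_num
  have h1mem : (1:ℝ) ∈ Set.Ioo (Hfun A B m p q l1 l2 1) (Hfun A B m p q l1 l2 0) := by
    rw [hH0, hH1]; exact ⟨one_pos, hR0⟩
  obtain ⟨n, hn, hHn⟩ := intermediate_value_Ioo' (by norm_num : (0:ℝ) ≤ 1) hcont h1mem
  exact ⟨n, hn, hHn⟩

lemma Hanti (A B m p q l1 l2 : ℝ) (hm : 0 < m) (hmA : m < A) (hmB : m < B)
    (hp : 0 < p) (hq : 0 < q) (hl1 : 0 < l1) (hl2 : 0 < l2) :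
    ∀ x ∈ Set.Icc (0:ℝ) 1, ∀ y ∈ Set.Icc (0:ℝ) 1, x < y →
      Hfun A B m p q l1 l2 y < Hfun A B m p q l1 l2 x := by
  intro x hx y hy hxy
  have d1x : 0 < A - m*x := by nlinarith [hx.1, hx.2]
  have d1y : 0 < A - m*y := by nlinarith [hy.1, hy.2]
  have d2x : 0 < B - m*x := by nlinarith [hx.1, hx.2]
  have d2y : 0 < B - m*y := by nlinarith [hy.1, hy.2]
  have h1 : (1-y)/(A-m*y) < (1-x)/(A-m*x) := by
    rw [div_lt_div_iff₀ d1y d1x]; nlinarith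
  have h2 : (1-y)/(B-m*y) < (1-x)/(B-m*x) := by
    rw [div_lt_div_iff₀ d2y d2x]; nlinarith
  have e1 : Hfun A B m p q l1 l2 y
      = p*l1*((1-y)/(A-m*y)) + q*l2*((1-y)/(B-m*y)) := by unfold Hfun; ring
  have e2 : Hfun A B m p q l1 l2 x
      = p*l1*((1-x)/(A-m*x)) + q*l2*((1-x)/(B-m*x)) := by unfold Hfun; ring
  rw [e1, e2]
  have := mul_lt_mul_of_pos_left h1 (by positivity : (0:ℝ) < p*l1)
  have := mul_lt_mul_of_pos_left h2 (by positivity : (0:ℝ) < q*l2)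
  linarith

lemma keyEq (A B m p q l1 l2 : ℝ) (hm : 0 < m) (hmA : m < A) (hmB : m < B)
    (hp : 0 < p) (hq : 0 < q) (hl1 : 0 < l1) (hl2 : 0 < l2)
    (hroot : ∃ n ∈ Set.Ioo (0:ℝ) 1, Hfun A B m p q l1 l2 n = 1)
    (hanti : ∀ x ∈ Set.Icc (0:ℝ) 1, ∀ y ∈ Set.Icc (0:ℝ) 1, x < y →
      Hfun A B m p q l1 l2 y < Hfun A B m p q l1 l2 x) :
    ∃! e : ℝ × ℝ, (0 < e.1 ∧ 0 < e.2 ∧ e.1 + e.2 < 1) ∧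
      p*(l1*e.1+l2*e.2)*(1-(e.1+e.2)) = (A - m*(e.1+e.2))*e.1 ∧
      q*(l1*e.1+l2*e.2)*(1-(e.1+e.2)) = (B - m*(e.1+e.2))*e.2 := by
  obtain ⟨n, ⟨hn0, hn1⟩, hHn⟩ := hroot
  have dA : 0 < A - m*n := by nlinarith
  have dB : 0 < B - m*n := by nlinarith
  have hS : 0 < p*(B-m*n) + q*(A-m*n) := by positivity
  have ekey : (1-n)*(p*l1*(B-m*n) + q*l2*(A-m*n)) = (A-m*n)*(B-m*n) := by
    have h := hHn
    rw [Hrepr A B m p q l1 l2 n (ne_of_gt dA) (ne_of_gt dB),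
      div_eq_one_iff_eq (by positivity)] at h
    exact h
  obtain ⟨Λ, hΛdef⟩ : ∃ x:ℝ, x = n*(A-m*n)*(B-m*n)/(p*(B-m*n)+q*(A-m*n)) := ⟨_, rfl⟩
  have hΛ : 0 < Λ := by rw [hΛdef]; positivity
  have eS : (p*(B-m*n)+q*(A-m*n))*Λ = n*(A-m*n)*(B-m*n) := by
    rw [hΛdef]; field_simp
  obtain ⟨i1, hi1def⟩ : ∃ x:ℝ, x = Λ*p/(A-m*n) := ⟨_, rfl⟩
  obtain ⟨i2, hi2def⟩ : ∃ x:ℝ, x = Λ*q/(B-m*n) := ⟨_, rfl⟩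
  have hi1 : 0 < i1 := by rw [hi1def]; positivity
  have hi2 : 0 < i2 := by rw [hi2def]; positivity
  have eA : (A-m*n)*i1 = Λ*p := by rw [hi1def]; field_simp
  have eB : (B-m*n)*i2 = Λ*q := by rw [hi2def]; field_simp
  have esum : i1 + i2 = n :=
    mul_left_cancel₀ (a := (A-m*n)*(B-m*n)) (by positivity)
      (by linear_combination (B-m*n)*eA + (A-m*n)*eB + eS)
  refine ⟨(i1, i2), ⟨⟨hi1, hi2, by simp only; rw [esum]; exact hn1⟩, ?_, ?_⟩, ?_⟩
  · show p*(l1*i1+l2*i2)*(1-(i1+i2)) = (A - m*(i1+i2))*i1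
    rw [esum]
    refine mul_left_cancel₀ (a := (A-m*n)*(B-m*n)) (by positivity) ?_
    linear_combination (p*(1-n)*l1*(B-m*n) - (A-m*n)*(B-m*n))*eA
      + p*(1-n)*l2*(A-m*n)*eB + p*Λ*ekey
  · show q*(l1*i1+l2*i2)*(1-(i1+i2)) = (B - m*(i1+i2))*i2
    rw [esum]
    refine mul_left_cancel₀ (a := (A-m*n)*(B-m*n)) (by positivity) ?_
    linear_combination q*(1-n)*l1*(B-m*n)*eA
      + (q*(1-n)*l2*(A-m*n) - (A-m*n)*(B-m*n))*eB + q*Λ*ekey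
  · rintro ⟨e1, e2⟩ ⟨⟨he1, he2, hes⟩, heq1, heq2⟩
    simp only at he1 he2 hes heq1 heq2
    obtain ⟨s, hsdef⟩ : ∃ x:ℝ, x = e1 + e2 := ⟨_, rfl⟩
    rw [← hsdef] at hes heq1 heq2
    have hs0 : 0 < s := by rw [hsdef]; positivity
    have dAs : 0 < A - m*s := by nlinarith
    have dBs : 0 < B - m*s := by nlinarith
    obtain ⟨L, hLdef⟩ : ∃ x:ℝ, x = (l1*e1+l2*e2)*(1-s) := ⟨_, rfl⟩
    have hL : 0 < L := by
      rw [hLdef]; exact mul_pos (by positivity) (by linarith)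
    have hA1 : (A-m*s)*e1 = p*L := by rw [hLdef]; linear_combination -heq1
    have hB1 : (B-m*s)*e2 = q*L := by rw [hLdef]; linear_combination -heq2
    -- H s = 1
    have hkey2 : (1-s)*(p*l1*(B-m*s) + q*l2*(A-m*s)) = (A-m*s)*(B-m*s) := by
      have h : L*((1-s)*(p*l1*(B-m*s) + q*l2*(A-m*s))) = L*((A-m*s)*(B-m*s)) := by
        linear_combination (-((1-s)*l1*(B-m*s)))*hA1 - ((1-s)*l2*(A-m*s))*hB1
          - ((A-m*s)*(B-m*s))*hLdef
      exact mul_left_cancel₀ (ne_of_gt hL) h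
    have hHs : Hfun A B m p q l1 l2 s = 1 := by
      rw [Hrepr A B m p q l1 l2 s (ne_of_gt dAs) (ne_of_gt dBs), hkey2,
        div_self (by positivity)]
    -- s = n
    have hsn : s = n := by
      rcases lt_trichotomy s n with h | h | h
      · exfalso
        have := hanti s ⟨le_of_lt hs0, le_of_lt hes⟩ n ⟨le_of_lt hn0, le_of_lt hn1⟩ h
        rw [hHn, hHs] at this; exact lt_irrefl 1 this
      · exact h
      · exfalso
        have := hanti n ⟨le_of_lt hn0, le_of_lt hn1⟩ s ⟨le_of_lt hs0, le_of_lt hes⟩ h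
        rw [hHn, hHs] at this; exact lt_irrefl 1 this
    rw [hsn] at hA1 hB1
    have hsum' : e1 + e2 = n := by rw [← hsdef, hsn]
    -- L = Λ
    have hLΛ : L = Λ := by
      refine mul_left_cancel₀ (a := p*(B-m*n)+q*(A-m*n)) (ne_of_gt hS) ?_
      linear_combination (-(B-m*n))*hA1 - (A-m*n)*hB1 - eS
        + ((A-m*n)*(B-m*n))*hsum'
    rw [hLΛ] at hA1 hB1
    have he1i1 : e1 = i1 :=
      mul_left_cancel₀ (ne_of_gt dA) (by linear_combination hA1 - eA)
    have he2i2 : e2 = i2 :=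
      mul_left_cancel₀ (ne_of_gt dB) (by linear_combination hB1 - eB)
    exact Prod.ext he1i1 he2i2

theorem stmt18 (b b1 b2 d ε l1 l2 γ1 γ2 p q : ℝ)
    (hb1 : 0 < b1) (hd : 0 < d) (hε : 0 < ε) (hl1 : 0 < l1) (hl2 : 0 < l2)
    (hγ1 : 0 < γ1) (hγ2 : 0 < γ2) (hp : 0 < p) (hq : 0 < q)
    (hb : b1 ≤ b) (hb2 : b2 = b - b1) (hpq : p + q = 1)
    (hR0 : 1 < p*l1/(b + ε + γ1) + q*l2/(b + ε + γ2)) :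
    ∃! e : ℝ × ℝ, (0 < e.1 ∧ 0 < e.2 ∧ e.1 + e.2 < 1) ∧ planarF b b2 ε l1 l2 γ1 γ2 p q e = 0 := by
  have hm : 0 < b2 + ε := by rw [hb2]; linarith
  have hmA : b2 + ε < b + ε + γ1 := by rw [hb2]; linarith
  have hmB : b2 + ε < b + ε + γ2 := by rw [hb2]; linarith
  have key := keyEq (b + ε + γ1) (b + ε + γ2) (b2 + ε) p q l1 l2 hm hmA hmB hp hq hl1 hl2
    (Hroot _ _ _ _ _ _ _ hm hmA hmB hp hq hl1 hl2 hR0)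
    (Hanti _ _ _ _ _ _ _ hm hmA hmB hp hq hl1 hl2)
  obtain ⟨e, ⟨hcond, h1, h2⟩, huniq⟩ := key
  refine ⟨e, ⟨hcond, ?_⟩, ?_⟩
  · have hc1 : (planarF b b2 ε l1 l2 γ1 γ2 p q e).1 = 0 := by
      simp only [planarF]
      linear_combination h1
    have hc2 : (planarF b b2 ε l1 l2 γ1 γ2 p q e).2 = 0 := by
      simp only [planarF]
      linear_combination h2
    exact Prod.ext hc1 hc2
  · rintro y ⟨hcy, hFy⟩
    apply huniq
    have hy1 : (planarF b b2 ε l1 l2 γ1 γ2 p q y).1 = 0 := by rw [hFy]; rfl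
    have hy2 : (planarF b b2 ε l1 l2 γ1 γ2 p q y).2 = 0 := by rw [hFy]; rfl
    simp only [planarF] at hy1 hy2
    exact ⟨hcy, by linear_combination hy1, by linear_combination hy2⟩
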